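/- Composite rule for Wigner d-matrices (two-vertex case): let ℓ₁, ℓ₂ be half-integer spins, θ₁, θ₂ ∈ ℝ, and let Δ₁, Δ₂ be shifts with Δ₁ − (ℓ₁ + ℓ₂) ∈ ℤ and Δ₂ − (ℓ₁ + ℓ₂) ∈ ℤ. Then ∑_{ε₁, ε₂} d^{ℓ₁}_{ε₁,ε₂}(θ₁) · d^{ℓ₁}_{ε₂,ε₁}(θ₂) · d^{ℓ₂}_{ε₁+Δ₁, ε₂+Δ₂}(θ₁) · d^{ℓ₂}_{ε₂+Δ₂, ε₁+Δ₁}(θ₂) = ∑_{s=|ℓ₁−ℓ₂|}^{ℓ₁+ℓ₂} d^{s}_{Δ₁,Δ₂}(θ₁) · d^{s}_{Δ₂,Δ₁}(θ₂), where ε₁, ε₂ range over {−ℓ₁, −ℓ₁+1, …, ℓ₁}, s increases in integer steps from |ℓ₁−ℓ₂| to ℓ₁+ℓ₂, and any d-matrix element whose magnetic indices lie outside the allowed range for its spin is zero by convention. -/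

import Mathlib

/-- The Wigner (small) d-matrix element `d^ℓ_{m,n}(θ)`, encoded via doubled indices:
`L = 2ℓ`, `M = 2m`, `N = 2n` (so that `ℓ ± m` and `ℓ ± n` are the integers
`(L ± M)/2`, `(L ± N)/2`).  It vanishes by convention when `|m| > ℓ` or `|n| > ℓ`. -/
noncomputable def wignerd (L M N : ℤ) (θ : ℝ) : ℝ :=
  if |M| ≤ L ∧ |N| ≤ L then
    Real.sqrt
      ((Nat.factorial ((L + M) / 2).toNat * Nat.factorial ((L - M) / 2).toNat *
        Nat.factorial ((L + N) / 2).toNat * Nat.factorial ((L - N) / 2).toNat : ℕ)) *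
    ∑ s ∈ Finset.Icc (max 0 ((N - M) / 2)) (min ((L + N) / 2) ((L - M) / 2)),
      (-1 : ℝ) ^ ((M - N) / 2 + s) *
        Real.cos (θ / 2) ^ (L + (N - M) / 2 - 2 * s) *
        Real.sin (θ / 2) ^ ((M - N) / 2 + 2 * s) /
        ((Nat.factorial ((L + N) / 2 - s).toNat * Nat.factorial s.toNat *
          Nat.factorial ((M - N) / 2 + s).toNat *
          Nat.factorial ((L - M) / 2 - s).toNat : ℕ))
  else 0

namespace WignerAux
open MvPolynomial Finset

variable {A : Type*} [CommRing A]

noncomputable def mexp (L j : ℕ) : Fin 2 →₀ ℕ := Finsupp.single 0 j + Finsupp.single 1 (L - j)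

lemma mexp_apply0 (L j : ℕ) : mexp L j 0 = j := by simp [mexp]
lemma mexp_apply1 (L j : ℕ) : mexp L j 1 = L - j := by simp [mexp]

lemma mexp_inj {L j k : ℕ} (h : mexp L j = mexp L k) : j = k := by
  have := congrArg (fun f => f 0) h
  simpa [mexp] using this

noncomputable def mono (L i : ℕ) : MvPolynomial (Fin 2) A := X 0 ^ i * X 1 ^ (L - i)

lemma mono_eq_monomial (L i : ℕ) : (mono L i : MvPolynomial (Fin 2) A) = monomial (mexp L i) 1 := by
  rw [mono, X_pow_eq_monomial, X_pow_eq_monomial, monomial_mul, mexp, one_mul]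

noncomputable def phi (g : Matrix (Fin 2) (Fin 2) A) :
    MvPolynomial (Fin 2) A →ₐ[A] MvPolynomial (Fin 2) A :=
  aeval ![C (g 0 0) * X 0 + C (g 1 0) * X 1, C (g 0 1) * X 0 + C (g 1 1) * X 1]

lemma phi_X0 (g : Matrix (Fin 2) (Fin 2) A) :
    phi g (X 0) = C (g 0 0) * X 0 + C (g 1 0) * X 1 := by simp [phi]

lemma phi_X1 (g : Matrix (Fin 2) (Fin 2) A) :
    phi g (X 1) = C (g 0 1) * X 0 + C (g 1 1) * X 1 := by simp [phi]

lemma phi_C (g : Matrix (Fin 2) (Fin 2) A) (a : A) : phi g (C a) = C a := by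
  simp [phi, algebraMap_eq]

lemma phi_phi (g h : Matrix (Fin 2) (Fin 2) A) (p : MvPolynomial (Fin 2) A) :
    phi g (phi h p) = phi (g * h) p := by
  have : (phi g).comp (phi h) = phi (g * h) := by
    apply MvPolynomial.algHom_ext
    intro i
    fin_cases i
    · show phi g (phi h (X 0)) = phi (g * h) (X 0)
      rw [phi_X0, map_add, map_mul, map_mul, phi_C, phi_C, phi_X0, phi_X1, phi_X0,
        Matrix.mul_apply, Matrix.mul_apply, Fin.sum_univ_two, Fin.sum_univ_two]
      simp only [map_add, map_mul]
      ring
    · show phi g (phi h (X 1)) = phi (g * h) (X 1)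
      rw [phi_X1, map_add, map_mul, map_mul, phi_C, phi_C, phi_X0, phi_X1, phi_X1,
        Matrix.mul_apply, Matrix.mul_apply, Fin.sum_univ_two, Fin.sum_univ_two]
      simp only [map_add, map_mul]
      ring
  exact DFunLike.congr_fun this p

noncomputable def Tc (L : ℕ) (g : Matrix (Fin 2) (Fin 2) A) (j i : ℤ) : A :=
  if 0 ≤ j ∧ j ≤ L ∧ 0 ≤ i ∧ i ≤ L then
    coeff (mexp L j.toNat) (phi g (mono L i.toNat))
  else 0

lemma Tc_eq_zero {L : ℕ} {g : Matrix (Fin 2) (Fin 2) A} {j i : ℤ}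
    (h : ¬(0 ≤ j ∧ j ≤ L ∧ 0 ≤ i ∧ i ≤ L)) : Tc L g j i = 0 := if_neg h

lemma Tc_natCast (L : ℕ) (g : Matrix (Fin 2) (Fin 2) A) (j i : ℕ) (hj : j ≤ L) (hi : i ≤ L) :
    Tc L g (j : ℤ) (i : ℤ) = coeff (mexp L j) (phi g (mono L i)) := by
  rw [Tc, if_pos]
  · simp
  · exact ⟨Int.natCast_nonneg j, by exact_mod_cast hj, Int.natCast_nonneg i, by exact_mod_cast hi⟩

lemma phi_mono_isHomogeneous (g : Matrix (Fin 2) (Fin 2) A) {L i : ℕ} (hi : i ≤ L) :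
    (phi g (mono L i)).IsHomogeneous L := by
  rw [mono, map_mul, map_pow, map_pow, phi_X0, phi_X1]
  have h1 : (C (g 0 0) * X 0 + C (g 1 0) * X 1 : MvPolynomial (Fin 2) A).IsHomogeneous 1 :=
    MvPolynomial.IsHomogeneous.add
      ((isHomogeneous_X A (0 : Fin 2)).C_mul (g 0 0))
      ((isHomogeneous_X A (1 : Fin 2)).C_mul (g 1 0))
  have h2 : (C (g 0 1) * X 0 + C (g 1 1) * X 1 : MvPolynomial (Fin 2) A).IsHomogeneous 1 :=
    MvPolynomial.IsHomogeneous.add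
      ((isHomogeneous_X A (0 : Fin 2)).C_mul (g 0 1))
      ((isHomogeneous_X A (1 : Fin 2)).C_mul (g 1 1))
  have := (h1.pow i).mul (h2.pow (L - i))
  rwa [one_mul, one_mul, Nat.add_sub_cancel' hi] at this

lemma homog_repr {p : MvPolynomial (Fin 2) A} {L : ℕ} (hp : p.IsHomogeneous L) :
    p = ∑ k ∈ range (L + 1), C (coeff (mexp L k) p) * mono L k := by
  apply MvPolynomial.ext
  intro m
  rw [coeff_sum]
  have hterm : ∀ k ∈ range (L + 1),
      coeff m (C (coeff (mexp L k) p) * (mono L k : MvPolynomial (Fin 2) A))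
        = if mexp L k = m then coeff m p else 0 := by
    intro k _
    rw [mono_eq_monomial, coeff_C_mul, coeff_monomial]
    split
    · next h => rw [h, mul_one]
    · rw [mul_zero]
  rw [Finset.sum_congr rfl hterm]
  by_cases hm : coeff m p = 0
  · rw [hm]
    simp
  · have hdeg : m.degree = L := by
      by_contra hne
      exact hm (hp.coeff_eq_zero hne)
    have hdeg2 : m 0 + m 1 = L := by
      rw [← hdeg, Finsupp.degree_apply]
      rw [show (∑ i ∈ m.support, m i) = ∑ i : Fin 2, m i from
        Finset.sum_subset (Finset.subset_univ _) (by
          intro x _ hx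
          simpa using Finsupp.notMem_support_iff.mp hx)]
      rw [Fin.sum_univ_two]
    have hmeq : m = mexp L (m 0) := by
      ext x
      fin_cases x
      · show m 0 = mexp L (m 0) 0
        rw [mexp_apply0]
      · show m 1 = mexp L (m 0) 1
        rw [mexp_apply1]
        omega
    have hcond : ∀ k, mexp L k = m ↔ k = m 0 := by
      intro k
      constructor
      · intro h
        have := congrArg (fun f => f 0) h
        simpa [mexp] using this
      · intro h
        rw [h, ← hmeq]
    rw [Finset.sum_congr rfl (fun k _ => by rw [if_congr (hcond k) rfl rfl])]
    rw [Finset.sum_ite_eq' (range (L + 1)) (m 0) (fun _ => coeff m p)]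
    rw [if_pos (Finset.mem_range.mpr (by omega))]

/-- multiplicativity -/
lemma Tc_mul (L : ℕ) (g h : Matrix (Fin 2) (Fin 2) A) (j i : ℤ) :
    Tc L (g * h) j i = ∑ k ∈ range (L + 1), Tc L g j (k : ℤ) * Tc L h (k : ℤ) i := by
  by_cases hj : 0 ≤ j ∧ j ≤ L
  · by_cases hi : 0 ≤ i ∧ i ≤ L
    · lift j to ℕ using hj.1 with j'
      lift i to ℕ using hi.1 with i'
      have hjL : j' ≤ L := by exact_mod_cast hj.2
      have hiL : i' ≤ L := by exact_mod_cast hi.2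
      rw [Tc_natCast L (g * h) j' i' hjL hiL, ← phi_phi,
        homog_repr (phi_mono_isHomogeneous h hiL), map_sum, coeff_sum]
      refine Finset.sum_congr rfl fun k hk => ?_
      have hkL : k ≤ L := by
        have := Finset.mem_range.mp hk
        omega
      rw [map_mul, phi_C, coeff_C_mul,
        Tc_natCast L g j' k hjL hkL, Tc_natCast L h k i' hkL hiL, mul_comm]
    · rw [Tc_eq_zero (by tauto)]
      refine (Finset.sum_eq_zero fun k _ => ?_).symm
      rw [Tc_eq_zero (L := L) (g := h) (by tauto), mul_zero]
  · rw [Tc_eq_zero (by tauto)]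
    refine (Finset.sum_eq_zero fun k _ => ?_).symm
    rw [Tc_eq_zero (L := L) (g := g) (by tauto), zero_mul]



lemma mexp_sub0 (L j : ℕ) (h1 : 1 ≤ j) :
    mexp (L + 1) j - Finsupp.single 0 1 = mexp L (j - 1) := by
  ext x
  fin_cases x <;> simp [mexp, Finsupp.single_apply] <;> omega

lemma mexp_sub1 (L j : ℕ) (h1 : j ≤ L) :
    mexp (L + 1) j - Finsupp.single 1 1 = mexp L j := by
  ext x
  fin_cases x <;> simp [mexp, Finsupp.single_apply] <;> omega

lemma mem_support0 (L j : ℕ) : (0 : Fin 2) ∈ (mexp L j).support ↔ j ≠ 0 := by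
  rw [Finsupp.mem_support_iff, mexp_apply0]

lemma mem_support1 (L j : ℕ) : (1 : Fin 2) ∈ (mexp L j).support ↔ ¬ L ≤ j := by
  rw [Finsupp.mem_support_iff, mexp_apply1]
  omega

lemma coeff_X0_mul (L j : ℕ) (P : MvPolynomial (Fin 2) A) :
    coeff (mexp (L + 1) j) (X 0 * P) = if 1 ≤ j then coeff (mexp L (j - 1)) P else 0 := by
  rw [mul_comm, coeff_mul_X']
  by_cases h : 1 ≤ j
  · rw [if_pos h, if_pos ((mem_support0 _ _).mpr (by omega)), mexp_sub0 L j h]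
  · rw [if_neg h, if_neg (by rw [mem_support0]; omega)]

lemma coeff_X1_mul (L j : ℕ) (P : MvPolynomial (Fin 2) A) :
    coeff (mexp (L + 1) j) (X 1 * P) = if j ≤ L then coeff (mexp L j) P else 0 := by
  rw [mul_comm, coeff_mul_X']
  by_cases h : j ≤ L
  · rw [if_pos h, if_pos ((mem_support1 _ _).mpr (by omega)), mexp_sub1 L j h]
  · rw [if_neg h, if_neg (by rw [mem_support1]; omega)]

lemma coeff_lin_mul (L j : ℕ) (u v : A) (P : MvPolynomial (Fin 2) A) :
    coeff (mexp (L + 1) j) ((C u * X 0 + C v * X 1) * P)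
      = u * (if 1 ≤ j then coeff (mexp L (j - 1)) P else 0)
        + v * (if j ≤ L then coeff (mexp L j) P else 0) := by
  rw [add_mul, coeff_add, mul_assoc, mul_assoc, coeff_C_mul, coeff_C_mul,
    coeff_X0_mul, coeff_X1_mul]

/-- helper: `Tc` at integer index shifted, expressed with ifs -/
lemma Tc_ite_left (L : ℕ) (g : Matrix (Fin 2) (Fin 2) A) (j i : ℕ) (hj : j ≤ L + 1) (hi : i ≤ L) :
    Tc L g ((j : ℤ) - 1) (i : ℤ) = if 1 ≤ j then coeff (mexp L (j - 1)) (phi g (mono L i)) else 0 := by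
  by_cases h : 1 ≤ j
  · rw [if_pos h]
    have : ((j : ℤ) - 1) = ((j - 1 : ℕ) : ℤ) := by omega
    rw [this, Tc_natCast L g (j - 1) i (by omega) hi]
  · rw [if_neg h, Tc_eq_zero]
    intro hc
    omega

lemma Tc_ite_right (L : ℕ) (g : Matrix (Fin 2) (Fin 2) A) (j i : ℕ) (hi : i ≤ L) :
    Tc L g (j : ℤ) (i : ℤ) = if j ≤ L then coeff (mexp L j) (phi g (mono L i)) else 0 := by
  by_cases h : j ≤ L
  · rw [if_pos h, Tc_natCast L g j i h hi]
  · rw [if_neg h, Tc_eq_zero]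
    intro hc
    have := hc.2.1
    omega

lemma R1 (L : ℕ) (g : Matrix (Fin 2) (Fin 2) A) (j : ℤ) (i : ℕ) (hi : i ≤ L) :
    Tc (L + 1) g j ((i : ℤ) + 1)
      = g 0 0 * Tc L g (j - 1) i + g 1 0 * Tc L g j i := by
  by_cases hj : 0 ≤ j ∧ j ≤ (L : ℤ) + 1
  · lift j to ℕ using hj.1 with jn
    have hjn : jn ≤ L + 1 := by exact_mod_cast hj.2
    have e1 : ((i : ℤ) + 1) = ((i + 1 : ℕ) : ℤ) := by push_cast; ring
    rw [e1, Tc_natCast (L + 1) g jn (i + 1) (by exact_mod_cast hjn) (by omega)]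
    have e2 : (mono (L + 1) (i + 1) : MvPolynomial (Fin 2) A) = X 0 * mono L i := by
      rw [mono, mono, pow_succ, Nat.succ_sub_succ]
      ring
    rw [e2, map_mul, phi_X0, coeff_lin_mul, Tc_ite_left L g jn i hjn hi,
      Tc_ite_right L g jn i hi]
  · rw [Tc_eq_zero (by push_cast; omega), Tc_eq_zero (L := L) (by omega),
      Tc_eq_zero (L := L) (by omega), mul_zero, mul_zero, add_zero]

lemma R2 (L : ℕ) (g : Matrix (Fin 2) (Fin 2) A) (j : ℤ) (i : ℕ) (hi : i ≤ L) :
    Tc (L + 1) g j (i : ℤ)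
      = g 0 1 * Tc L g (j - 1) i + g 1 1 * Tc L g j i := by
  by_cases hj : 0 ≤ j ∧ j ≤ (L : ℤ) + 1
  · lift j to ℕ using hj.1 with jn
    have hjn : jn ≤ L + 1 := by exact_mod_cast hj.2
    rw [Tc_natCast (L + 1) g jn i (by exact_mod_cast hjn) (by omega)]
    have e2 : (mono (L + 1) i : MvPolynomial (Fin 2) A) = X 1 * mono L i := by
      rw [mono, mono, show L + 1 - i = (L - i) + 1 by omega, pow_succ]
      ring
    rw [e2, map_mul, phi_X1, coeff_lin_mul, Tc_ite_left L g jn i hjn hi,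
      Tc_ite_right L g jn i hi]
  · rw [Tc_eq_zero (by push_cast; omega), Tc_eq_zero (L := L) (by omega),
      Tc_eq_zero (L := L) (by omega), mul_zero, mul_zero, add_zero]

noncomputable def chr (L : ℕ) (g : Matrix (Fin 2) (Fin 2) A) : A :=
  ∑ i ∈ range (L + 1), Tc L g (i : ℤ) (i : ℤ)

lemma chr_zero (g : Matrix (Fin 2) (Fin 2) A) : chr 0 g = 1 := by
  rw [chr]
  rw [Finset.sum_range_one]
  rw [Tc_natCast 0 g 0 0 le_rfl le_rfl]
  rw [mono, pow_zero, pow_zero, one_mul, map_one]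
  have : mexp 0 0 = 0 := by
    ext x
    fin_cases x
    · show mexp 0 0 0 = 0
      rw [mexp_apply0]
    · show mexp 0 0 1 = 0
      rw [mexp_apply1]
  rw [this, coeff_zero_one]

lemma chr_one (g : Matrix (Fin 2) (Fin 2) A) : chr 1 g = g 0 0 + g 1 1 := by
  rw [chr, Finset.sum_range_succ, Finset.sum_range_one]
  rw [Tc_natCast 1 g 0 0 (by omega) (by omega), Tc_natCast 1 g 1 1 le_rfl le_rfl]
  have m0 : (mono 1 0 : MvPolynomial (Fin 2) A) = X 1 := by
    rw [mono]; simp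
  have m1 : (mono 1 1 : MvPolynomial (Fin 2) A) = X 0 := by
    rw [mono]; simp
  rw [m0, m1, phi_X0, phi_X1, coeff_add, coeff_add, coeff_C_mul, coeff_C_mul,
    coeff_C_mul, coeff_C_mul]
  have c00 : coeff (mexp 1 0) (X 0 : MvPolynomial (Fin 2) A) = 0 := by
    rw [X, coeff_monomial, if_neg]
    intro h
    have := congrArg (fun f => f 1) h
    simp [mexp] at this
  have c01 : coeff (mexp 1 0) (X 1 : MvPolynomial (Fin 2) A) = 1 := by
    rw [X, coeff_monomial, if_pos]
    ext x
    fin_cases x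
    · show Finsupp.single 1 1 0 = mexp 1 0 0
      simp [mexp]
    · show Finsupp.single 1 1 1 = mexp 1 0 1
      simp [mexp]
  have c10 : coeff (mexp 1 1) (X 0 : MvPolynomial (Fin 2) A) = 1 := by
    rw [X, coeff_monomial, if_pos]
    ext x
    fin_cases x
    · show Finsupp.single 0 1 0 = mexp 1 1 0
      simp [mexp]
    · show Finsupp.single 0 1 1 = mexp 1 1 1
      simp [mexp]
  have c11 : coeff (mexp 1 1) (X 1 : MvPolynomial (Fin 2) A) = 0 := by
    rw [X, coeff_monomial, if_neg]
    intro h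
    have := congrArg (fun f => f 0) h
    simp [mexp] at this
  rw [c00, c01, c10, c11]
  ring

lemma chr_rec (g : Matrix (Fin 2) (Fin 2) A) (M : ℕ) :
    (g 0 0 + g 1 1) * chr (M + 1) g
      = chr (M + 2) g + (g 0 0 * g 1 1 - g 0 1 * g 1 0) * chr M g := by
  -- abbreviations
  set a := g 0 0
  set b := g 0 1
  set c := g 1 0
  set d := g 1 1
  -- expand chr (M+2)
  have E1 : chr (M + 2) g
      = d * Tc (M + 1) g 0 0 + a * chr (M + 1) g
        + c * ∑ i ∈ range (M + 1), Tc (M + 1) g ((i : ℤ) + 1) (i : ℤ) := by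
    rw [chr, Finset.sum_range_succ']
    push_cast
    have hstep : ∀ i ∈ range (M + 2), Tc (M + 2) g ((i : ℤ) + 1) ((i : ℤ) + 1)
        = a * Tc (M + 1) g i i + c * Tc (M + 1) g ((i : ℤ) + 1) i := by
      intro i hi
      have hiM : i ≤ M + 1 := by
        have := Finset.mem_range.mp hi
        omega
      have := R1 (M + 1) g ((i : ℤ) + 1) i hiM
      rw [this]
      simp
      rfl
    rw [Finset.sum_congr rfl hstep, Finset.sum_add_distrib, ← Finset.mul_sum, ← Finset.mul_sum]
    have h00 : Tc (M + 2) g (0 : ℤ) (0 : ℤ) = d * Tc (M + 1) g 0 0 := by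
      have h2 := R2 (M + 1) g 0 0 (by omega)
      push_cast at h2
      have hz : Tc (M + 1) g (-1 : ℤ) (0 : ℤ) = 0 := Tc_eq_zero (by omega)
      rw [h2, hz, mul_zero, zero_add]
    have hlast : ∑ i ∈ range (M + 2), Tc (M + 1) g ((i : ℤ) + 1) (i : ℤ)
        = ∑ i ∈ range (M + 1), Tc (M + 1) g ((i : ℤ) + 1) (i : ℤ) := by
      rw [Finset.sum_range_succ, Tc_eq_zero (by push_cast; omega), add_zero]
    rw [hlast, ← chr]
    rw [h00]
    ring
  -- now the rest
  set T0 := Tc (M + 1) g 0 0 with hT0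
  set S1 := ∑ i ∈ range (M + 1), Tc (M + 1) g ((i : ℤ) + 1) (i : ℤ) with hS1
  set S2 := ∑ i ∈ range (M + 1), Tc M g ((i : ℤ) + 1) (i : ℤ) with hS2
  have hA : chr (M + 1) g = a * chr M g + c * S2 + T0 := by
    rw [chr, Finset.sum_range_succ']
    push_cast
    have hstep2 : ∀ i ∈ range (M + 1), Tc (M + 1) g ((i : ℤ) + 1) ((i : ℤ) + 1)
        = a * Tc M g i i + c * Tc M g ((i : ℤ) + 1) i := by
      intro i hi
      have hiM : i ≤ M := by
        have := Finset.mem_range.mp hi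
        omega
      have := R1 M g ((i : ℤ) + 1) i hiM
      rw [this]
      simp
      rfl
    rw [Finset.sum_congr rfl hstep2, Finset.sum_add_distrib, ← Finset.mul_sum, ← Finset.mul_sum,
      ← chr, ← hS2, ← hT0]
  have hB : S1 = b * chr M g + d * S2 := by
    rw [hS1]
    have hstep3 : ∀ i ∈ range (M + 1), Tc (M + 1) g ((i : ℤ) + 1) (i : ℤ)
        = b * Tc M g i i + d * Tc M g ((i : ℤ) + 1) i := by
      intro i hi
      have hiM : i ≤ M := by
        have := Finset.mem_range.mp hi
        omega
      have := R2 M g ((i : ℤ) + 1) i hiM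
      rw [this]
      simp
      rfl
    rw [Finset.sum_congr rfl hstep3, Finset.sum_add_distrib, ← Finset.mul_sum, ← Finset.mul_sum,
      ← chr, ← hS2]
  rw [E1, hB, hA]
  ring



lemma cheb (v : ℕ → A) (τ : A) (h0 : v 0 = 1) (h1 : v 1 = τ)
    (hrec : ∀ M : ℕ, τ * v (M + 1) = v (M + 2) + v M) :
    ∀ n m : ℕ, v (n + m) * v n = ∑ k ∈ range (n + 1), v (m + 2 * k) := by
  intro n
  induction n using Nat.strong_induction_on with
  | _ n ih =>
    match n with
    | 0 => intro m; simp [h0]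
    | 1 =>
      intro m
      rw [show (1 : ℕ) + m = m + 1 by omega, h1, mul_comm, hrec m, Finset.sum_range_succ,
        Finset.sum_range_one, show m + 2 * 0 = m by omega, show m + 2 * 1 = m + 2 by omega,
        add_comm]
    | (n + 2) =>
      intro m
      have hv2 : v (n + 2) = τ * v (n + 1) - v n := by
        have h := hrec n
        linear_combination -h
      have e1 : v (n + 2 + m) * v (n + 2)
          = τ * (v ((n + 1) + (m + 1)) * v (n + 1)) - v (n + (m + 2)) * v n := by
        rw [hv2, show n + 1 + (m + 1) = n + 2 + m by omega, show n + (m + 2) = n + 2 + m by omega]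
        ring
      rw [e1, ih (n + 1) (by omega) (m + 1), ih n (by omega) (m + 2), Finset.mul_sum]
      have e2 : ∀ k ∈ range (n + 2), τ * v (m + 1 + 2 * k) = v (m + 2 + 2 * k) + v (m + 2 * k) := by
        intro k _
        have h := hrec (m + 2 * k)
        rw [show m + 1 + 2 * k = m + 2 * k + 1 by omega, show m + 2 + 2 * k = m + 2 * k + 2 by omega]
        exact h
      rw [Finset.sum_congr rfl e2, Finset.sum_add_distrib]
      have e3 : ∑ k ∈ range (n + 2), v (m + 2 + 2 * k)
          = ∑ k ∈ range (n + 1), v (m + 2 + 2 * k) + v (m + 2 + 2 * (n + 1)) :=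
        Finset.sum_range_succ _ _
      rw [e3]
      have e4 : ∑ k ∈ range (n + 3), v (m + 2 * k)
          = ∑ k ∈ range (n + 2), v (m + 2 * k) + v (m + 2 * (n + 2)) :=
        Finset.sum_range_succ _ _
      rw [e4, show m + 2 + 2 * (n + 1) = m + 2 * (n + 2) by omega]
      ring


lemma Tc_diag (L : ℕ) (α β : A) (j i : ℤ) :
    Tc L !![α, 0; 0, β] j i
      = if j = i ∧ 0 ≤ i ∧ i ≤ L then α ^ i.toNat * β ^ (L - i.toNat) else 0 := by
  by_cases hr : 0 ≤ j ∧ j ≤ (L : ℤ) ∧ 0 ≤ i ∧ i ≤ (L : ℤ)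
  · lift j to ℕ using hr.1 with jn
    lift i to ℕ using hr.2.2.1 with ic
    have hjL : jn ≤ L := by exact_mod_cast hr.2.1
    have hiL : ic ≤ L := by exact_mod_cast hr.2.2.2
    rw [Tc_natCast L _ jn ic hjL hiL]
    have hphi : phi !![α, 0; 0, β] (mono L ic) = C (α ^ ic * β ^ (L - ic)) * mono L ic := by
      rw [mono, map_mul, map_pow, map_pow, phi_X0, phi_X1]
      have e0 : (!![α, 0; 0, β] : Matrix (Fin 2) (Fin 2) A) 0 0 = α := rfl
      have e1 : (!![α, 0; 0, β] : Matrix (Fin 2) (Fin 2) A) 1 0 = 0 := rfl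
      have e2 : (!![α, 0; 0, β] : Matrix (Fin 2) (Fin 2) A) 0 1 = 0 := rfl
      have e3 : (!![α, 0; 0, β] : Matrix (Fin 2) (Fin 2) A) 1 1 = β := rfl
      simp only [e0, e1, e2, e3, map_zero, zero_mul, add_zero, zero_add]
      rw [mul_pow, mul_pow, ← map_pow, ← map_pow, map_mul]
      ring
    rw [hphi, coeff_C_mul, mono_eq_monomial, coeff_monomial]
    by_cases hji : jn = ic
    · subst hji
      rw [if_pos rfl, if_pos ⟨rfl, Int.natCast_nonneg _, by exact_mod_cast hjL⟩, mul_one]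
      simp
    · rw [if_neg (fun h => hji (mexp_inj h).symm), if_neg (by
        intro h
        exact hji (by exact_mod_cast h.1)), mul_zero]
  · rw [Tc_eq_zero hr, if_neg]
    intro h
    apply hr
    refine ⟨?_, ?_, h.2.1, h.2.2⟩ <;> omega

lemma Tc_swap (L : ℕ) (j i : ℤ) :
    Tc L !![(0 : A), 1; 1, 0] j i = if j + i = L ∧ 0 ≤ i ∧ i ≤ L then 1 else 0 := by
  by_cases hr : 0 ≤ j ∧ j ≤ (L : ℤ) ∧ 0 ≤ i ∧ i ≤ (L : ℤ)
  · lift j to ℕ using hr.1 with jn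
    lift i to ℕ using hr.2.2.1 with ic
    have hjL : jn ≤ L := by exact_mod_cast hr.2.1
    have hiL : ic ≤ L := by exact_mod_cast hr.2.2.2
    rw [Tc_natCast L _ jn ic hjL hiL]
    have hphi : phi !![(0 : A), 1; 1, 0] (mono L ic) = mono L (L - ic) := by
      rw [mono, map_mul, map_pow, map_pow, phi_X0, phi_X1]
      have e0 : (!![(0:A), 1; 1, 0] : Matrix (Fin 2) (Fin 2) A) 0 0 = 0 := rfl
      have e1 : (!![(0:A), 1; 1, 0] : Matrix (Fin 2) (Fin 2) A) 1 0 = 1 := rfl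
      have e2 : (!![(0:A), 1; 1, 0] : Matrix (Fin 2) (Fin 2) A) 0 1 = 1 := rfl
      have e3 : (!![(0:A), 1; 1, 0] : Matrix (Fin 2) (Fin 2) A) 1 1 = 0 := rfl
      simp only [e0, e1, e2, e3, map_zero, map_one, zero_mul, one_mul, zero_add, add_zero]
      rw [mono, Nat.sub_sub_self hiL]
      ring
    rw [hphi, mono_eq_monomial, coeff_monomial]
    by_cases hcond : (jn : ℤ) + ic = L
    · rw [if_pos (by
        have : L - ic = jn := by omega
        rw [this]), if_pos ⟨hcond, Int.natCast_nonneg _, by exact_mod_cast hiL⟩]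
    · rw [if_neg (fun h => hcond (by
        have := mexp_inj h
        omega)), if_neg (by
        intro h
        exact hcond h.1)]
  · rw [Tc_eq_zero hr, if_neg]
    intro h
    apply hr
    refine ⟨?_, ?_, h.2.1, h.2.2⟩ <;> omega

lemma Tc_conj_swap (L : ℕ) (g : Matrix (Fin 2) (Fin 2) A) (j i : ℕ) (hj : j ≤ L) (hi : i ≤ L) :
    Tc L (!![(0:A),1;1,0] * (g * !![(0:A),1;1,0])) (j : ℤ) (i : ℤ)
      = Tc L g ((L : ℤ) - j) ((L : ℤ) - i) := by
  rw [Tc_mul]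
  have hterm : ∀ k ∈ range (L + 1),
      Tc L !![(0:A),1;1,0] (j : ℤ) (k : ℤ) * Tc L (g * !![(0:A),1;1,0]) (k : ℤ) (i : ℤ)
        = if k = L - j then Tc L (g * !![(0:A),1;1,0]) (k : ℤ) (i : ℤ) else 0 := by
    intro k hk
    have hkL : k ≤ L := by
      have := Finset.mem_range.mp hk
      omega
    rw [Tc_swap]
    by_cases hc : k = L - j
    · rw [if_pos hc, if_pos ⟨by omega, by omega, by exact_mod_cast hkL⟩, one_mul]
    · rw [if_neg hc, if_neg (fun hcc => hc (by omega)), zero_mul]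
  rw [Finset.sum_congr rfl hterm, Finset.sum_ite_eq' (range (L + 1)) (L - j)
      (fun k => Tc L (g * !![(0:A),1;1,0]) (k : ℤ) (i : ℤ)),
    if_pos (Finset.mem_range.mpr (by omega))]
  rw [Tc_mul]
  have hterm2 : ∀ l ∈ range (L + 1),
      Tc L g ((L - j : ℕ) : ℤ) (l : ℤ) * Tc L !![(0:A),1;1,0] (l : ℤ) (i : ℤ)
        = if l = L - i then Tc L g ((L - j : ℕ) : ℤ) (l : ℤ) else 0 := by
    intro l hl
    have hlL : l ≤ L := by
      have := Finset.mem_range.mp hl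
      omega
    rw [Tc_swap]
    by_cases hc : l = L - i
    · rw [if_pos hc, if_pos ⟨by omega, by omega, by exact_mod_cast hi⟩, mul_one]
    · rw [if_neg hc, if_neg (fun hcc => hc (by omega)), mul_zero]
  rw [Finset.sum_congr rfl hterm2, Finset.sum_ite_eq' (range (L + 1)) (L - i)
      (fun l => Tc L g ((L - j : ℕ) : ℤ) (l : ℤ)),
    if_pos (Finset.mem_range.mpr (by omega)), Nat.cast_sub hj, Nat.cast_sub hi]

lemma Tc_conj_J (L : ℕ) (g : Matrix (Fin 2) (Fin 2) A) (j i : ℕ) (hj : j ≤ L) (hi : i ≤ L) :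
    Tc L (!![(1:A),0;0,-1] * (g * !![(1:A),0;0,-1])) (j : ℤ) (i : ℤ)
      = (-1) ^ (L - j) * (-1) ^ (L - i) * Tc L g (j : ℤ) (i : ℤ) := by
  rw [Tc_mul]
  have hterm : ∀ k ∈ range (L + 1),
      Tc L !![(1:A),0;0,-1] (j : ℤ) (k : ℤ) * Tc L (g * !![(1:A),0;0,-1]) (k : ℤ) (i : ℤ)
        = if k = j then (-1) ^ (L - j) * Tc L (g * !![(1:A),0;0,-1]) (k : ℤ) (i : ℤ) else 0 := by
    intro k hk
    have hkL : k ≤ L := by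
      have := Finset.mem_range.mp hk
      omega
    rw [Tc_diag]
    by_cases hc : k = j
    · rw [if_pos ⟨by rw [hc], by omega, by exact_mod_cast hkL⟩, if_pos hc, hc]
      simp
    · rw [if_neg (fun hcc => hc (by
        have := hcc.1
        omega)), zero_mul, if_neg hc]
  rw [Finset.sum_congr rfl hterm, Finset.sum_ite_eq' (range (L + 1)) j _,
    if_pos (Finset.mem_range.mpr (by omega)), Tc_mul]
  have hterm2 : ∀ l ∈ range (L + 1),
      Tc L g (j : ℤ) (l : ℤ) * Tc L !![(1:A),0;0,-1] (l : ℤ) (i : ℤ)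
        = if l = i then Tc L g (j : ℤ) (l : ℤ) * (-1) ^ (L - i) else 0 := by
    intro l hl
    have hlL : l ≤ L := by
      have := Finset.mem_range.mp hl
      omega
    rw [Tc_diag]
    by_cases hc : l = i
    · rw [if_pos ⟨by rw [hc], by omega, by exact_mod_cast hi⟩, if_pos hc]
      simp
    · rw [if_neg (fun hcc => hc (by
        have := hcc.1
        omega)), mul_zero, if_neg hc]
  rw [Finset.sum_congr rfl hterm2, Finset.sum_ite_eq' (range (L + 1)) i _,
    if_pos (Finset.mem_range.mpr (by omega))]
  ring

lemma matrix_conj_eq (g : Matrix (Fin 2) (Fin 2) A) (hg1 : g 1 1 = g 0 0)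
    (hg2 : g 1 0 = - g 0 1) :
    !![(0:A),1;1,0] * (g * !![(0:A),1;1,0]) = !![(1:A),0;0,-1] * (g * !![(1:A),0;0,-1]) := by
  ext x y
  fin_cases x <;> fin_cases y <;>
    simp [Matrix.mul_apply, Fin.sum_univ_two, hg1, hg2]

lemma Tc_flip_pair (L : ℕ) (g h : Matrix (Fin 2) (Fin 2) A)
    (hg1 : g 1 1 = g 0 0) (hg2 : g 1 0 = - g 0 1)
    (hh1 : h 1 1 = h 0 0) (hh2 : h 1 0 = - h 0 1) (j i : ℤ) :
    Tc L g ((L : ℤ) - j) ((L : ℤ) - i) * Tc L h ((L : ℤ) - i) ((L : ℤ) - j)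
      = Tc L g j i * Tc L h i j := by
  by_cases hrj : 0 ≤ j ∧ j ≤ (L : ℤ)
  · by_cases hri : 0 ≤ i ∧ i ≤ (L : ℤ)
    · lift j to ℕ using hrj.1 with jn
      lift i to ℕ using hri.1 with ic
      have hjL : jn ≤ L := by exact_mod_cast hrj.2
      have hiL : ic ≤ L := by exact_mod_cast hri.2
      have f1 : Tc L g ((L : ℤ) - jn) ((L : ℤ) - ic)
          = (-1) ^ (L - jn) * (-1) ^ (L - ic) * Tc L g jn ic := by
        rw [← Tc_conj_swap L g jn ic hjL hiL, matrix_conj_eq g hg1 hg2,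
          Tc_conj_J L g jn ic hjL hiL]
      have f2 : Tc L h ((L : ℤ) - ic) ((L : ℤ) - jn)
          = (-1) ^ (L - ic) * (-1) ^ (L - jn) * Tc L h ic jn := by
        rw [← Tc_conj_swap L h ic jn hiL hjL, matrix_conj_eq h hh1 hh2,
          Tc_conj_J L h ic jn hiL hjL]
      rw [f1, f2]
      have s1 : ((-1 : A) ^ (L - jn)) * ((-1) ^ (L - jn)) = 1 := by
        rw [← pow_add]
        exact Even.neg_one_pow ⟨L - jn, by ring⟩
      have s2 : ((-1 : A) ^ (L - ic)) * ((-1) ^ (L - ic)) = 1 := by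
        rw [← pow_add]
        exact Even.neg_one_pow ⟨L - ic, by ring⟩
      calc ((-1 : A) ^ (L - jn) * (-1) ^ (L - ic) * Tc L g jn ic) *
            ((-1) ^ (L - ic) * (-1) ^ (L - jn) * Tc L h ic jn)
          = (((-1 : A) ^ (L - jn)) * ((-1) ^ (L - jn))) * (((-1 : A) ^ (L - ic)) * ((-1) ^ (L - ic)))
              * (Tc L g jn ic * Tc L h ic jn) := by ring
        _ = Tc L g (jn : ℤ) (ic : ℤ) * Tc L h (ic : ℤ) (jn : ℤ) := by rw [s1, s2]; ring
    · rw [Tc_eq_zero (L := L) (g := g) (by omega), Tc_eq_zero (L := L) (g := g) (by omega),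
        zero_mul, zero_mul]
  · rw [Tc_eq_zero (L := L) (g := g) (by omega), Tc_eq_zero (L := L) (g := g) (by omega),
      zero_mul, zero_mul]

lemma Tc_map {B : Type*} [CommRing B] (f : A →+* B) (L : ℕ) (g : Matrix (Fin 2) (Fin 2) A)
    (j i : ℤ) : Tc L (g.map f) j i = f (Tc L g j i) := by
  by_cases hr : 0 ≤ j ∧ j ≤ (L : ℤ) ∧ 0 ≤ i ∧ i ≤ (L : ℤ)
  · rw [Tc, Tc, if_pos hr, if_pos hr]
    have hphi : phi (g.map f) (mono L i.toNat)
        = MvPolynomial.map (f : A →+* B) (phi g (mono L i.toNat)) := by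
      rw [mono, map_mul, map_pow, map_pow, phi_X0, phi_X1]
      rw [mono, map_mul, map_pow, map_pow, phi_X0, phi_X1]
      simp only [Matrix.map_apply]
      rw [map_mul, map_pow, map_pow, map_add, map_add, map_mul, map_mul, map_mul, map_mul]
      simp [MvPolynomial.map_C]
    rw [hphi, MvPolynomial.coeff_map]
  · rw [Tc_eq_zero hr, Tc_eq_zero hr, map_zero]

lemma Tc_entry (L : ℕ) (g : Matrix (Fin 2) (Fin 2) A) (j i : ℕ) (hj : j ≤ L) (hi : i ≤ L) :
    Tc L g (j : ℤ) (i : ℤ)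
      = ∑ p ∈ range (i + 1), ∑ q ∈ range (L - i + 1),
          (if p + q = j then
            (i.choose p : A) * ((L - i).choose q : A) * g 0 0 ^ p * g 1 0 ^ (i - p)
              * g 0 1 ^ q * g 1 1 ^ (L - i - q)
          else 0) := by
  have expand : phi g (mono L i)
      = ∑ p ∈ range (i + 1), ∑ q ∈ range (L - i + 1),
          C ((i.choose p : A) * ((L - i).choose q : A) * g 0 0 ^ p * g 1 0 ^ (i - p)
              * g 0 1 ^ q * g 1 1 ^ (L - i - q)) * mono L (p + q) := by
    rw [mono, map_mul, map_pow, map_pow, phi_X0, phi_X1, add_pow, add_pow,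
      Finset.sum_mul_sum]
    refine Finset.sum_congr rfl fun p hp => Finset.sum_congr rfl fun q hq => ?_
    have hp' : p ≤ i := by
      have := Finset.mem_range.mp hp
      omega
    have hq' : q ≤ L - i := by
      have := Finset.mem_range.mp hq
      omega
    rw [mono, show L - (p + q) = (i - p) + (L - i - q) by omega]
    rw [map_mul, map_mul, map_mul, map_mul, map_mul, map_pow, map_pow, map_pow, map_pow,
      ← map_natCast (C : A →+* MvPolynomial (Fin 2) A) (i.choose p),
      ← map_natCast (C : A →+* MvPolynomial (Fin 2) A) ((L - i).choose q)]
    rw [mul_pow, mul_pow, mul_pow, mul_pow]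
    ring
  rw [Tc_natCast L g j i hj hi, expand, coeff_sum]
  refine Finset.sum_congr rfl fun p hp => ?_
  rw [coeff_sum]
  refine Finset.sum_congr rfl fun q hq => ?_
  have hp' : p ≤ i := by
    have := Finset.mem_range.mp hp
    omega
  have hq' : q ≤ L - i := by
    have := Finset.mem_range.mp hq
    omega
  rw [coeff_C_mul, mono_eq_monomial, coeff_monomial]
  rw [mul_ite, mul_one, mul_zero]
  exact if_congr ⟨fun h => mexp_inj h, fun h => by rw [h]⟩ rfl rfl

noncomputable def rot (θ : ℝ) : Matrix (Fin 2) (Fin 2) ℝ :=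
  !![Real.cos (θ/2), -Real.sin (θ/2); Real.sin (θ/2), Real.cos (θ/2)]

lemma rot_00 (θ : ℝ) : rot θ 0 0 = Real.cos (θ/2) := rfl
lemma rot_01 (θ : ℝ) : rot θ 0 1 = -Real.sin (θ/2) := rfl
lemma rot_10 (θ : ℝ) : rot θ 1 0 = Real.sin (θ/2) := rfl
lemma rot_11 (θ : ℝ) : rot θ 1 1 = Real.cos (θ/2) := rfl

lemma Tc_rot (L : ℕ) (θ : ℝ) (j i : ℕ) (hj : j ≤ L) (hi : i ≤ L) :
    Tc L (rot θ) (j : ℤ) (i : ℤ)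
      = (i.factorial * (L - i).factorial : ℝ) *
        ∑ s ∈ Finset.Icc (max 0 ((i : ℤ) - j)) (min (i : ℤ) ((L : ℤ) - j)),
          (-1 : ℝ) ^ ((j : ℤ) - i + s) * Real.cos (θ/2) ^ ((L : ℤ) + ((i : ℤ) - j) - 2 * s) *
            Real.sin (θ/2) ^ ((j : ℤ) - i + 2 * s) /
            ((((i : ℤ) - s).toNat.factorial * s.toNat.factorial *
              (((j : ℤ) - i) + s).toNat.factorial *
              (((L : ℤ) - j) - s).toNat.factorial : ℕ) : ℝ) := by
  rw [Tc_entry L (rot θ) j i hj hi, Finset.mul_sum]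
  simp only [rot_00, rot_01, rot_10, rot_11]
  rw [← Finset.sum_product']
  rw [← Finset.sum_filter]
  refine Finset.sum_nbij' (fun x => (i : ℤ) - x.1)
    (fun s => (((i : ℤ) - s).toNat, ((j : ℤ) - (i : ℤ) + s).toNat)) ?_ ?_ ?_ ?_ ?_
  · intro x hx
    simp only [Finset.mem_filter, Finset.mem_product, Finset.mem_range] at hx
    simp only [Finset.mem_Icc, max_le_iff, le_min_iff]
    omega
  · intro s hs
    simp only [Finset.mem_Icc, max_le_iff, le_min_iff] at hs
    simp only [Finset.mem_filter, Finset.mem_product, Finset.mem_range]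
    omega
  · intro x hx
    simp only [Finset.mem_filter, Finset.mem_product, Finset.mem_range] at hx
    ext
    · simp only
      omega
    · simp only
      omega
  · intro s hs
    simp only [Finset.mem_Icc, max_le_iff, le_min_iff] at hs
    simp only
    omega
  · intro x hx
    simp only [Finset.mem_filter, Finset.mem_product, Finset.mem_range] at hx
    obtain ⟨⟨hp, hq⟩, hpq⟩ := hx
    obtain ⟨p, q⟩ := x
    simp only at hp hq hpq ⊢
    have hp' : p ≤ i := by omega
    have hq' : q ≤ L - i := by omega
    have t1 : ((i : ℤ) - ((i : ℤ) - p)).toNat = p := by omega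
    have t2 : ((i : ℤ) - p).toNat = i - p := by omega
    have t3 : (((j : ℤ) - i) + ((i : ℤ) - p)).toNat = q := by omega
    have t4 : (((L : ℤ) - j) - ((i : ℤ) - p)).toNat = L - i - q := by omega
    have e1 : (j : ℤ) - i + ((i : ℤ) - p) = (q : ℤ) := by omega
    have e2 : (L : ℤ) + ((i : ℤ) - j) - 2 * ((i : ℤ) - p) = ((p + (L - i - q) : ℕ) : ℤ) := by
      push_cast
      omega
    have e3 : (j : ℤ) - i + 2 * ((i : ℤ) - p) = (((i - p) + q : ℕ) : ℤ) := by
      push_cast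
      omega
    rw [t1, t2, t3, t4, e1, e2, e3, zpow_natCast, zpow_natCast, zpow_natCast]
    rw [Nat.cast_choose ℝ hp', Nat.cast_choose ℝ hq', neg_pow]
    have F1 : (p.factorial : ℝ) ≠ 0 := by exact_mod_cast p.factorial_ne_zero
    have F2 : ((i - p).factorial : ℝ) ≠ 0 := by exact_mod_cast (i - p).factorial_ne_zero
    have F3 : (q.factorial : ℝ) ≠ 0 := by exact_mod_cast q.factorial_ne_zero
    have F4 : ((L - i - q).factorial : ℝ) ≠ 0 := by exact_mod_cast (L - i - q).factorial_ne_zero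
    push_cast
    rw [pow_add, pow_add]
    field_simp

lemma sqrt_shuffle (x y S : ℝ) (hx : 0 ≤ x) (hy : 0 ≤ y) :
    (Real.sqrt x * Real.sqrt y * S) * Real.sqrt y = Real.sqrt x * (y * S) := by
  have h := Real.mul_self_sqrt hy
  calc (Real.sqrt x * Real.sqrt y * S) * Real.sqrt y
      = (Real.sqrt y * Real.sqrt y) * (Real.sqrt x * S) := by ring
    _ = y * (Real.sqrt x * S) := by rw [h]
    _ = Real.sqrt x * (y * S) := by ring

lemma wignerd_zero {L M N : ℤ} (θ : ℝ) (h : ¬(|M| ≤ L ∧ |N| ≤ L)) : wignerd L M N θ = 0 :=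
  if_neg h

lemma wignerd_eq (L : ℕ) (θ : ℝ) (j i : ℕ) (hj : j ≤ L) (hi : i ≤ L) :
    wignerd L (2 * j - L) (2 * i - L) θ
        * Real.sqrt ((i.factorial * (L - i).factorial : ℕ) : ℝ)
      = Real.sqrt ((j.factorial * (L - j).factorial : ℕ) : ℝ) * Tc L (rot θ) j i := by
  rw [Tc_rot L θ j i hj hi]
  rw [wignerd, if_pos (by constructor <;> (rw [abs_le]; push_cast; omega))]
  have d1 : ((L : ℤ) + (2 * j - L)) / 2 = (j : ℤ) := by omega
  have d2 : ((L : ℤ) - (2 * j - L)) / 2 = (L : ℤ) - j := by omega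
  have d3 : ((L : ℤ) + (2 * i - L)) / 2 = (i : ℤ) := by omega
  have d4 : ((L : ℤ) - (2 * i - L)) / 2 = (L : ℤ) - i := by omega
  have d5 : ((2 * i - L) - (2 * j - L)) / 2 = (i : ℤ) - j := by omega
  have d6 : ((2 * j - L) - (2 * i - L)) / 2 = (j : ℤ) - i := by omega
  rw [d1, d2, d3, d4, d5, d6]
  have t1 : ((j : ℤ)).toNat = j := by omega
  have t2 : ((L : ℤ) - j).toNat = L - j := by omega
  have t3 : ((i : ℤ)).toNat = i := by omega
  have t4 : ((L : ℤ) - i).toNat = L - i := by omega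
  rw [t1, t2, t3, t4]
  have hC1 : ((j.factorial * (L - j).factorial * i.factorial * (L - i).factorial : ℕ) : ℝ)
      = ((j.factorial * (L - j).factorial : ℕ) : ℝ) * (i.factorial * (L - i).factorial : ℝ) := by
    push_cast
    ring
  have hC2 : ((i.factorial * (L - i).factorial : ℕ) : ℝ) = (i.factorial * (L - i).factorial : ℝ) := by
    push_cast
    ring
  rw [hC1, hC2]
  have hx : (0 : ℝ) ≤ ((j.factorial * (L - j).factorial : ℕ) : ℝ) := by positivity
  have hy : (0 : ℝ) ≤ (i.factorial * (L - i).factorial : ℝ) := by positivity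
  rw [Real.sqrt_mul hx]
  exact sqrt_shuffle _ _ _ hx hy

lemma wignerd_pair (L : ℕ) (θ₁ θ₂ : ℝ) (j i : ℤ) :
    wignerd L (2 * j - L) (2 * i - L) θ₁ * wignerd L (2 * i - L) (2 * j - L) θ₂
      = Tc L (rot θ₁) j i * Tc L (rot θ₂) i j := by
  by_cases hrj : 0 ≤ j ∧ j ≤ (L : ℤ)
  · by_cases hri : 0 ≤ i ∧ i ≤ (L : ℤ)
    · lift j to ℕ using hrj.1 with jn
      lift i to ℕ using hri.1 with ic
      have hjL : jn ≤ L := by exact_mod_cast hrj.2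
      have hiL : ic ≤ L := by exact_mod_cast hri.2
      have h1 := wignerd_eq L θ₁ jn ic hjL hiL
      have h2 := wignerd_eq L θ₂ ic jn hiL hjL
      have hnei : Real.sqrt ((ic.factorial * (L - ic).factorial : ℕ) : ℝ) ≠ 0 := by
        refine ne_of_gt (Real.sqrt_pos.mpr ?_)
        have : 0 < ic.factorial * (L - ic).factorial :=
          Nat.mul_pos ic.factorial_pos (L - ic).factorial_pos
        exact_mod_cast this
      have hnej : Real.sqrt ((jn.factorial * (L - jn).factorial : ℕ) : ℝ) ≠ 0 := by
        refine ne_of_gt (Real.sqrt_pos.mpr ?_)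
        have : 0 < jn.factorial * (L - jn).factorial :=
          Nat.mul_pos jn.factorial_pos (L - jn).factorial_pos
        exact_mod_cast this
      apply mul_left_cancel₀ (mul_ne_zero hnei hnej)
      calc Real.sqrt ((ic.factorial * (L - ic).factorial : ℕ) : ℝ)
            * Real.sqrt ((jn.factorial * (L - jn).factorial : ℕ) : ℝ)
            * (wignerd L (2 * jn - L) (2 * ic - L) θ₁ * wignerd L (2 * ic - L) (2 * jn - L) θ₂)
          = (wignerd L (2 * jn - L) (2 * ic - L) θ₁
              * Real.sqrt ((ic.factorial * (L - ic).factorial : ℕ) : ℝ))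
            * (wignerd L (2 * ic - L) (2 * jn - L) θ₂
              * Real.sqrt ((jn.factorial * (L - jn).factorial : ℕ) : ℝ)) := by ring
        _ = (Real.sqrt ((jn.factorial * (L - jn).factorial : ℕ) : ℝ) * Tc L (rot θ₁) jn ic)
            * (Real.sqrt ((ic.factorial * (L - ic).factorial : ℕ) : ℝ) * Tc L (rot θ₂) ic jn) := by
            rw [h1, h2]
        _ = Real.sqrt ((ic.factorial * (L - ic).factorial : ℕ) : ℝ)
            * Real.sqrt ((jn.factorial * (L - jn).factorial : ℕ) : ℝ)
            * (Tc L (rot θ₁) jn ic * Tc L (rot θ₂) ic jn) := by ring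
    · rw [wignerd_zero θ₁ (by
        intro h
        have := h.2
        rw [abs_le] at this
        omega), zero_mul,
        Tc_eq_zero (L := L) (g := rot θ₁) (by omega), zero_mul]
  · rw [wignerd_zero θ₁ (by
      intro h
      have := h.1
      rw [abs_le] at this
      omega), zero_mul,
      Tc_eq_zero (L := L) (g := rot θ₁) (by omega), zero_mul]

lemma rot_h1 (θ : ℝ) : rot θ 1 1 = rot θ 0 0 := rfl

lemma rot_h2 (θ : ℝ) : rot θ 1 0 = - rot θ 0 1 := by
  rw [rot_10, rot_01, neg_neg]

lemma det_rot (θ : ℝ) : (rot θ).det = 1 := by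
  rw [Matrix.det_fin_two, rot_00, rot_01, rot_10, rot_11]
  have := Real.sin_sq_add_cos_sq (θ/2)
  nlinarith [this]

/-! ### Assembly in the group algebra `AddMonoidAlgebra ℝ (ℤ × ℤ)` -/

noncomputable def zet (p : ℤ × ℤ) : AddMonoidAlgebra ℝ (ℤ × ℤ) := AddMonoidAlgebra.single p 1

lemma zet_mul (p q : ℤ × ℤ) : zet p * zet q = zet (p + q) := by
  rw [zet, zet, zet, AddMonoidAlgebra.single_mul_single, one_mul]

lemma zet_pow (n : ℕ) (p : ℤ × ℤ) : zet p ^ n = zet (n • p) := by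
  rw [zet, zet, AddMonoidAlgebra.single_pow, one_pow]

lemma zet_zero : zet 0 = 1 := rfl

noncomputable def iR : ℝ →+* AddMonoidAlgebra ℝ (ℤ × ℤ) := AddMonoidAlgebra.singleZeroRingHom

lemma iR_apply (x : ℝ) : iR x = AddMonoidAlgebra.single 0 x := rfl

lemma fac1 (L k : ℕ) (hk : k ≤ L) :
    zet (1, 0) ^ k * zet (-1, 0) ^ (L - k) = zet (2 * (k : ℤ) - L, 0) := by
  rw [zet_pow, zet_pow, zet_mul]
  congr 1
  rw [Prod.smul_mk, Prod.smul_mk, Prod.mk_add_mk, Prod.mk.injEq]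
  constructor
  · rw [nsmul_eq_mul, nsmul_eq_mul]
    push_cast
    omega
  · simp

lemma fac2 (L k : ℕ) (hk : k ≤ L) :
    zet (0, 1) ^ k * zet (0, -1) ^ (L - k) = zet (0, 2 * (k : ℤ) - L) := by
  rw [zet_pow, zet_pow, zet_mul]
  congr 1
  rw [Prod.smul_mk, Prod.smul_mk, Prod.mk_add_mk, Prod.mk.injEq]
  constructor
  · simp
  · rw [nsmul_eq_mul, nsmul_eq_mul]
    push_cast
    omega

lemma Tc_mul_diag_left (L : ℕ) (α β : AddMonoidAlgebra ℝ (ℤ × ℤ))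
    (h : Matrix (Fin 2) (Fin 2) (AddMonoidAlgebra ℝ (ℤ × ℤ))) (i : ℕ) (hi : i ≤ L) (x : ℤ) :
    Tc L (!![α, 0; 0, β] * h) (i : ℤ) x = (α ^ i * β ^ (L - i)) * Tc L h (i : ℤ) x := by
  rw [Tc_mul]
  have hterm : ∀ k ∈ range (L + 1),
      Tc L !![α, 0; 0, β] (i : ℤ) (k : ℤ) * Tc L h (k : ℤ) x
        = if k = i then (α ^ i * β ^ (L - i)) * Tc L h (k : ℤ) x else 0 := by
    intro k hk
    have hkL : k ≤ L := by
      have := Finset.mem_range.mp hk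
      omega
    rw [Tc_diag]
    by_cases hc : k = i
    · rw [if_pos ⟨by rw [hc], by omega, by exact_mod_cast hkL⟩, if_pos hc]
      congr 2
      · rw [hc]
        simp
      · rw [hc]
        simp
    · rw [if_neg (fun hcc => hc (by
        have := hcc.1
        omega)), zero_mul, if_neg hc]
  rw [Finset.sum_congr rfl hterm, Finset.sum_ite_eq' (range (L + 1)) i _,
    if_pos (Finset.mem_range.mpr (by omega))]

noncomputable def W1 : Matrix (Fin 2) (Fin 2) (AddMonoidAlgebra ℝ (ℤ × ℤ)) :=
  !![zet (1, 0), 0; 0, zet (-1, 0)]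

noncomputable def W2 : Matrix (Fin 2) (Fin 2) (AddMonoidAlgebra ℝ (ℤ × ℤ)) :=
  !![zet (0, 1), 0; 0, zet (0, -1)]

noncomputable def GG (θ₁ θ₂ : ℝ) : Matrix (Fin 2) (Fin 2) (AddMonoidAlgebra ℝ (ℤ × ℤ)) :=
  W1 * ((rot θ₁).map iR * (W2 * (rot θ₂).map iR))

lemma chr_expand (L : ℕ) (θ₁ θ₂ : ℝ) :
    chr L (GG θ₁ θ₂)
      = ∑ e1 ∈ range (L + 1), ∑ e2 ∈ range (L + 1),
          AddMonoidAlgebra.single ((2 * (e1 : ℤ) - L, 2 * (e2 : ℤ) - L) : ℤ × ℤ)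
            (Tc L (rot θ₁) (e1 : ℤ) (e2 : ℤ) * Tc L (rot θ₂) (e2 : ℤ) (e1 : ℤ)) := by
  rw [chr]
  refine Finset.sum_congr rfl fun e1 he1 => ?_
  have he1L : e1 ≤ L := by
    have := Finset.mem_range.mp he1
    omega
  rw [GG, W1, Tc_mul_diag_left L _ _ _ e1 he1L, fac1 L e1 he1L, Tc_mul]
  rw [Finset.mul_sum]
  refine Finset.sum_congr rfl fun e2 he2 => ?_
  have he2L : e2 ≤ L := by
    have := Finset.mem_range.mp he2
    omega
  rw [W2, Tc_mul_diag_left L _ _ _ e2 he2L, fac2 L e2 he2L]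
  rw [Tc_map iR L (rot θ₁) e1 e2, Tc_map iR L (rot θ₂) e2 e1]
  rw [iR_apply, iR_apply, zet, zet]
  rw [show (AddMonoidAlgebra.single ((0 : ℤ × ℤ)) (Tc L (rot θ₂) (e2 : ℤ) (e1 : ℤ))
        : AddMonoidAlgebra ℝ (ℤ × ℤ)) = AddMonoidAlgebra.single 0 (Tc L (rot θ₂) (e2 : ℤ) (e1 : ℤ))
      from rfl]
  rw [AddMonoidAlgebra.single_mul_single, AddMonoidAlgebra.single_mul_single,
    AddMonoidAlgebra.single_mul_single]
  congr 1
  · rw [Prod.mk_add_mk]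
    simp
  · ring

lemma detGG (θ₁ θ₂ : ℝ) : (GG θ₁ θ₂).det = 1 := by
  rw [GG, Matrix.det_mul, Matrix.det_mul, Matrix.det_mul]
  have d1 : W1.det = 1 := by
    rw [W1, Matrix.det_fin_two_of, zet_mul, mul_zero, sub_zero]
    rw [show ((1 : ℤ), (0 : ℤ)) + (-1, 0) = 0 from rfl, zet_zero]
  have d2 : W2.det = 1 := by
    rw [W2, Matrix.det_fin_two_of, zet_mul, mul_zero, sub_zero]
    rw [show ((0 : ℤ), (1 : ℤ)) + (0, -1) = 0 from rfl, zet_zero]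
  have d3 : ∀ θ : ℝ, ((rot θ).map iR).det = 1 := by
    intro θ
    rw [← RingHom.mapMatrix_apply, ← RingHom.map_det, det_rot, map_one]
  rw [d1, d2, d3, d3, one_mul, one_mul, one_mul]

lemma sum_collapse {M : Type*} [AddCommMonoid M] (n : ℕ) (x : ℤ) (t : ℤ → M)
    (h0 : ∀ z : ℤ, ¬(0 ≤ z ∧ z ≤ n) → t z = 0) :
    ∑ f ∈ range (n + 1), (if (f : ℤ) = x then t f else 0) = t x := by
  by_cases hx : 0 ≤ x ∧ x ≤ (n : ℤ)
  · lift x to ℕ using hx.1 with xn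
    have hxn : xn ≤ n := by exact_mod_cast hx.2
    have : ∀ f ∈ range (n + 1), (if (f : ℤ) = (xn : ℤ) then t f else 0)
        = if f = xn then t f else 0 := by
      intro f _
      exact if_congr (by constructor <;> (intro h; exact_mod_cast h)) rfl rfl
    rw [Finset.sum_congr rfl this, Finset.sum_ite_eq' (range (n + 1)) xn _,
      if_pos (Finset.mem_range.mpr (by omega))]
  · rw [Finset.sum_eq_zero, (h0 x hx).symm]
    intro f hf
    have hfn : f ≤ n := by
      have := Finset.mem_range.mp hf
      omega
    rw [if_neg]
    intro h
    apply hx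
    constructor <;> omega

lemma chr_apply (L : ℕ) (θ₁ θ₂ : ℝ) (a b : ℤ) :
    (chr L (GG θ₁ θ₂)).coeff ((2 * a - L, 2 * b - L) : ℤ × ℤ)
      = Tc L (rot θ₁) a b * Tc L (rot θ₂) b a := by
  rw [chr_expand, AddMonoidAlgebra.coeff_sum, Finsupp.finset_sum_apply]
  have step1 : ∀ e1 ∈ range (L + 1),
      (∑ e2 ∈ range (L + 1), AddMonoidAlgebra.single
          ((2 * (e1 : ℤ) - L, 2 * (e2 : ℤ) - L) : ℤ × ℤ)
          (Tc L (rot θ₁) (e1 : ℤ) (e2 : ℤ) * Tc L (rot θ₂) (e2 : ℤ) (e1 : ℤ))).coeff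
        ((2 * a - L, 2 * b - L) : ℤ × ℤ)
      = if (e1 : ℤ) = a then Tc L (rot θ₁) (e1 : ℤ) b * Tc L (rot θ₂) b (e1 : ℤ) else 0 := by
    intro e1 _
    rw [AddMonoidAlgebra.coeff_sum, Finsupp.finset_sum_apply]
    have step2 : ∀ e2 ∈ range (L + 1),
        (AddMonoidAlgebra.single ((2 * (e1 : ℤ) - L, 2 * (e2 : ℤ) - L) : ℤ × ℤ)
          (Tc L (rot θ₁) (e1 : ℤ) (e2 : ℤ) * Tc L (rot θ₂) (e2 : ℤ) (e1 : ℤ))).coeff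
          ((2 * a - L, 2 * b - L) : ℤ × ℤ)
        = if (e1 : ℤ) = a then
            (if (e2 : ℤ) = b then Tc L (rot θ₁) (e1 : ℤ) (e2 : ℤ)
              * Tc L (rot θ₂) (e2 : ℤ) (e1 : ℤ) else 0)
          else 0 := by
      intro e2 _
      rw [AddMonoidAlgebra.coeff_single_apply, ← ite_and]
      refine if_congr ?_ rfl rfl
      rw [Prod.mk.injEq]
      constructor <;> (intro h; constructor <;> omega)
    rw [Finset.sum_congr rfl step2]
    by_cases hc : (e1 : ℤ) = a
    · simp only [if_pos hc]
      exact sum_collapse L b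
        (fun z => Tc L (rot θ₁) (e1 : ℤ) z * Tc L (rot θ₂) z (e1 : ℤ)) (fun z hz => by
          rw [Tc_eq_zero (L := L) (g := rot θ₁) (by omega), zero_mul])
    · simp only [if_neg hc]
      rw [Finset.sum_const_zero]
  rw [Finset.sum_congr rfl step1]
  exact sum_collapse L a
    (fun z => Tc L (rot θ₁) z b * Tc L (rot θ₂) b z) (fun z hz => by
      rw [Tc_eq_zero (L := L) (g := rot θ₁) (by omega), zero_mul])

lemma chr_mul_apply (L1 L2 : ℕ) (θ₁ θ₂ : ℝ) (c1 c2 : ℤ) :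
    (chr L1 (GG θ₁ θ₂) * chr L2 (GG θ₁ θ₂)).coeff
        ((2 * c1 - L1 - L2, 2 * c2 - L1 - L2) : ℤ × ℤ)
      = ∑ e1 ∈ range (L1 + 1), ∑ e2 ∈ range (L1 + 1),
          (Tc L1 (rot θ₁) (e1 : ℤ) (e2 : ℤ) * Tc L1 (rot θ₂) (e2 : ℤ) (e1 : ℤ)) *
          (Tc L2 (rot θ₁) (c1 - e1) (c2 - e2) * Tc L2 (rot θ₂) (c2 - e2) (c1 - e1)) := by
  rw [chr_expand L1 θ₁ θ₂, chr_expand L2 θ₁ θ₂, Finset.sum_mul, AddMonoidAlgebra.coeff_sum,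
    Finsupp.finset_sum_apply]
  refine Finset.sum_congr rfl fun e1 he1 => ?_
  rw [Finset.sum_mul, AddMonoidAlgebra.coeff_sum, Finsupp.finset_sum_apply]
  refine Finset.sum_congr rfl fun e2 he2 => ?_
  rw [Finset.mul_sum, AddMonoidAlgebra.coeff_sum, Finsupp.finset_sum_apply]
  have step1 : ∀ f1 ∈ range (L2 + 1),
      (AddMonoidAlgebra.single ((2 * (e1 : ℤ) - L1, 2 * (e2 : ℤ) - L1) : ℤ × ℤ)
          (Tc L1 (rot θ₁) (e1 : ℤ) (e2 : ℤ) * Tc L1 (rot θ₂) (e2 : ℤ) (e1 : ℤ)) *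
        ∑ f2 ∈ range (L2 + 1), AddMonoidAlgebra.single
          ((2 * (f1 : ℤ) - L2, 2 * (f2 : ℤ) - L2) : ℤ × ℤ)
          (Tc L2 (rot θ₁) (f1 : ℤ) (f2 : ℤ) * Tc L2 (rot θ₂) (f2 : ℤ) (f1 : ℤ))).coeff
        ((2 * c1 - L1 - L2, 2 * c2 - L1 - L2) : ℤ × ℤ)
      = if (f1 : ℤ) = c1 - e1 then
          (Tc L1 (rot θ₁) (e1 : ℤ) (e2 : ℤ) * Tc L1 (rot θ₂) (e2 : ℤ) (e1 : ℤ)) *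
            (Tc L2 (rot θ₁) (f1 : ℤ) (c2 - e2) * Tc L2 (rot θ₂) (c2 - e2) (f1 : ℤ))
        else 0 := by
    intro f1 _
    rw [Finset.mul_sum, AddMonoidAlgebra.coeff_sum, Finsupp.finset_sum_apply]
    have step2 : ∀ f2 ∈ range (L2 + 1),
        (AddMonoidAlgebra.single ((2 * (e1 : ℤ) - L1, 2 * (e2 : ℤ) - L1) : ℤ × ℤ)
            (Tc L1 (rot θ₁) (e1 : ℤ) (e2 : ℤ) * Tc L1 (rot θ₂) (e2 : ℤ) (e1 : ℤ)) *
          AddMonoidAlgebra.single ((2 * (f1 : ℤ) - L2, 2 * (f2 : ℤ) - L2) : ℤ × ℤ)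
            (Tc L2 (rot θ₁) (f1 : ℤ) (f2 : ℤ) * Tc L2 (rot θ₂) (f2 : ℤ) (f1 : ℤ))).coeff
          ((2 * c1 - L1 - L2, 2 * c2 - L1 - L2) : ℤ × ℤ)
        = if (f1 : ℤ) = c1 - e1 then
            (if (f2 : ℤ) = c2 - e2 then
              (Tc L1 (rot θ₁) (e1 : ℤ) (e2 : ℤ) * Tc L1 (rot θ₂) (e2 : ℤ) (e1 : ℤ)) *
              (Tc L2 (rot θ₁) (f1 : ℤ) (f2 : ℤ) * Tc L2 (rot θ₂) (f2 : ℤ) (f1 : ℤ))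
            else 0)
          else 0 := by
      intro f2 _
      rw [AddMonoidAlgebra.single_mul_single, AddMonoidAlgebra.coeff_single_apply, ← ite_and]
      refine if_congr ?_ rfl rfl
      rw [Prod.mk_add_mk, Prod.mk.injEq]
      constructor <;> (intro h; constructor <;> omega)
    rw [Finset.sum_congr rfl step2]
    by_cases hc : (f1 : ℤ) = c1 - e1
    · simp only [if_pos hc]
      exact sum_collapse L2 (c2 - e2)
        (fun z => (Tc L1 (rot θ₁) (e1 : ℤ) (e2 : ℤ) * Tc L1 (rot θ₂) (e2 : ℤ) (e1 : ℤ)) *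
          (Tc L2 (rot θ₁) (f1 : ℤ) z * Tc L2 (rot θ₂) z (f1 : ℤ))) (fun z hz => by
            rw [Tc_eq_zero (L := L2) (g := rot θ₁) (by omega), zero_mul, mul_zero])
    · simp only [if_neg hc]
      rw [Finset.sum_const_zero]
  rw [Finset.sum_congr rfl step1]
  exact sum_collapse L2 (c1 - e1)
    (fun z => (Tc L1 (rot θ₁) (e1 : ℤ) (e2 : ℤ) * Tc L1 (rot θ₂) (e2 : ℤ) (e1 : ℤ)) *
      (Tc L2 (rot θ₁) z (c2 - e2) * Tc L2 (rot θ₂) (c2 - e2) z)) (fun z hz => by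
        rw [Tc_eq_zero (L := L2) (g := rot θ₁) (by omega), zero_mul, mul_zero])

lemma chr_CG (g : Matrix (Fin 2) (Fin 2) (AddMonoidAlgebra ℝ (ℤ × ℤ)))
    (hdet : g 0 0 * g 1 1 - g 0 1 * g 1 0 = 1) (a b : ℕ) :
    chr a g * chr b g
      = ∑ k ∈ range (min a b + 1), chr ((max a b - min a b) + 2 * k) g := by
  have hrec : ∀ M : ℕ, (g 0 0 + g 1 1) * chr (M + 1) g = chr (M + 2) g + chr M g := by
    intro M
    have := chr_rec g M
    rw [hdet, one_mul] at this
    exact this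
  have base := cheb (fun L => chr L g) (g 0 0 + g 1 1) (chr_zero g) (chr_one g) hrec
  rcases le_total b a with h | h
  · have := base b (a - b)
    rw [show b + (a - b) = a by omega] at this
    rw [this, min_eq_right h, max_eq_left h]
  · have := base a (b - a)
    rw [show a + (b - a) = b by omega] at this
    rw [mul_comm, this, min_eq_left h, max_eq_right h]

end WignerAux

open WignerAux Finset

/-- Composite rule for Wigner d-matrices, two-vertex case (doubled indices:
`L₁ = 2ℓ₁`, `L₂ = 2ℓ₂`, `D₁ = 2Δ₁`, `D₂ = 2Δ₂`; the magnetic indices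
`ε₁, ε₂ ∈ {-ℓ₁, …, ℓ₁}` are encoded as `-L₁ + 2e` for `e ∈ {0, …, L₁}`, and the
recoupled spin `s ∈ {|ℓ₁-ℓ₂|, …, ℓ₁+ℓ₂}` as `|L₁-L₂| + 2k` for
`k ∈ {0, …, min(L₁,L₂)}`):
`∑_{ε₁,ε₂} d^{ℓ₁}_{ε₁ε₂}(θ₁) d^{ℓ₁}_{ε₂ε₁}(θ₂) d^{ℓ₂}_{ε₁+Δ₁,ε₂+Δ₂}(θ₁)
  d^{ℓ₂}_{ε₂+Δ₂,ε₁+Δ₁}(θ₂) = ∑_s d^s_{Δ₁Δ₂}(θ₁) d^s_{Δ₂Δ₁}(θ₂)`. -/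
theorem wignerd_composite_rule_two_vertices
    (L₁ L₂ : ℤ) (hL₁ : 0 ≤ L₁) (hL₂ : 0 ≤ L₂) (θ₁ θ₂ : ℝ) (D₁ D₂ : ℤ)
    (hD₁ : (D₁ - (L₁ + L₂)) % 2 = 0) (hD₂ : (D₂ - (L₁ + L₂)) % 2 = 0) :
    ∑ e₁ ∈ Finset.range (L₁.toNat + 1), ∑ e₂ ∈ Finset.range (L₁.toNat + 1),
      wignerd L₁ (-L₁ + 2 * e₁) (-L₁ + 2 * e₂) θ₁ *
        wignerd L₁ (-L₁ + 2 * e₂) (-L₁ + 2 * e₁) θ₂ *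
        wignerd L₂ (-L₁ + 2 * e₁ + D₁) (-L₁ + 2 * e₂ + D₂) θ₁ *
        wignerd L₂ (-L₁ + 2 * e₂ + D₂) (-L₁ + 2 * e₁ + D₁) θ₂
      = ∑ k ∈ Finset.range ((min L₁ L₂).toNat + 1),
          wignerd (|L₁ - L₂| + 2 * k) D₁ D₂ θ₁ *
            wignerd (|L₁ - L₂| + 2 * k) D₂ D₁ θ₂ := by
  set l1 := L₁.toNat with hl1
  set l2 := L₂.toNat with hl2
  have hc1 : (l1 : ℤ) = L₁ := Int.toNat_of_nonneg hL₁
  have hc2 : (l2 : ℤ) = L₂ := Int.toNat_of_nonneg hL₂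
  obtain ⟨c1, hcc1⟩ : ∃ c : ℤ, L₁ + L₂ - D₁ = 2 * c := ⟨(L₁ + L₂ - D₁) / 2, by omega⟩
  obtain ⟨c2, hcc2⟩ : ∃ c : ℤ, L₁ + L₂ - D₂ = 2 * c := ⟨(L₁ + L₂ - D₂) / 2, by omega⟩
  have lhs_eq : ∑ e₁ ∈ Finset.range (l1 + 1), ∑ e₂ ∈ Finset.range (l1 + 1),
      wignerd L₁ (-L₁ + 2 * e₁) (-L₁ + 2 * e₂) θ₁ *
        wignerd L₁ (-L₁ + 2 * e₂) (-L₁ + 2 * e₁) θ₂ *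
        wignerd L₂ (-L₁ + 2 * e₁ + D₁) (-L₁ + 2 * e₂ + D₂) θ₁ *
        wignerd L₂ (-L₁ + 2 * e₂ + D₂) (-L₁ + 2 * e₁ + D₁) θ₂
      = ∑ e1 ∈ range (l1 + 1), ∑ e2 ∈ range (l1 + 1),
          (Tc l1 (rot θ₁) (e1 : ℤ) (e2 : ℤ) * Tc l1 (rot θ₂) (e2 : ℤ) (e1 : ℤ)) *
          (Tc l2 (rot θ₁) (c1 - e1) (c2 - e2) * Tc l2 (rot θ₂) (c2 - e2) (c1 - e1)) := by
    refine Finset.sum_congr rfl fun e1 he1 => Finset.sum_congr rfl fun e2 he2 => ?_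
    have p1 : wignerd L₁ (-L₁ + 2 * e1) (-L₁ + 2 * e2) θ₁ *
        wignerd L₁ (-L₁ + 2 * e2) (-L₁ + 2 * e1) θ₂
        = Tc l1 (rot θ₁) (e1 : ℤ) (e2 : ℤ) * Tc l1 (rot θ₂) (e2 : ℤ) (e1 : ℤ) := by
      have h := wignerd_pair l1 θ₁ θ₂ (e1 : ℤ) (e2 : ℤ)
      rw [show 2 * (e1 : ℤ) - (l1 : ℤ) = -L₁ + 2 * e1 by omega,
        show 2 * (e2 : ℤ) - (l1 : ℤ) = -L₁ + 2 * e2 by omega, hc1] at h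
      exact h
    have p2 : wignerd L₂ (-L₁ + 2 * e1 + D₁) (-L₁ + 2 * e2 + D₂) θ₁ *
        wignerd L₂ (-L₁ + 2 * e2 + D₂) (-L₁ + 2 * e1 + D₁) θ₂
        = Tc l2 (rot θ₁) (c1 - e1) (c2 - e2) * Tc l2 (rot θ₂) (c2 - e2) (c1 - e1) := by
      have hflip := Tc_flip_pair l2 (rot θ₁) (rot θ₂) (rot_h1 θ₁) (rot_h2 θ₁)
        (rot_h1 θ₂) (rot_h2 θ₂) (c1 - e1) (c2 - e2)
      have hw := wignerd_pair l2 θ₁ θ₂ ((l2 : ℤ) - (c1 - e1)) ((l2 : ℤ) - (c2 - e2))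
      rw [hflip] at hw
      rw [show 2 * ((l2 : ℤ) - (c1 - e1)) - (l2 : ℤ) = -L₁ + 2 * e1 + D₁ by omega,
        show 2 * ((l2 : ℤ) - (c2 - e2)) - (l2 : ℤ) = -L₁ + 2 * e2 + D₂ by omega, hc2] at hw
      exact hw
    rw [← p1, ← p2]
    ring
  have hmin : (min L₁ L₂).toNat = min l1 l2 := by omega
  have rhs_eq : ∑ k ∈ Finset.range ((min L₁ L₂).toNat + 1),
      wignerd (|L₁ - L₂| + 2 * k) D₁ D₂ θ₁ * wignerd (|L₁ - L₂| + 2 * k) D₂ D₁ θ₂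
      = ∑ k ∈ range (min l1 l2 + 1),
          Tc (max l1 l2 - min l1 l2 + 2 * k) (rot θ₁)
              (c1 + k - min l1 l2) (c2 + k - min l1 l2) *
            Tc (max l1 l2 - min l1 l2 + 2 * k) (rot θ₂)
              (c2 + k - min l1 l2) (c1 + k - min l1 l2) := by
    rw [hmin]
    refine Finset.sum_congr rfl fun k hk => ?_
    set s := max l1 l2 - min l1 l2 + 2 * k with hs
    have habs : ((s : ℕ) : ℤ) = |L₁ - L₂| + 2 * k := by
      rcases le_total L₁ L₂ with h | h
      · rw [abs_of_nonpos (by omega), hs]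
        have : min l1 l2 ≤ max l1 l2 := min_le_max
        push_cast [Nat.cast_sub this]
        omega
      · rw [abs_of_nonneg (by omega), hs]
        have : min l1 l2 ≤ max l1 l2 := min_le_max
        push_cast [Nat.cast_sub this]
        omega
    set a := c1 + (k : ℤ) - min l1 l2 with ha
    set b := c2 + (k : ℤ) - min l1 l2 with hb
    have hflip := Tc_flip_pair s (rot θ₁) (rot θ₂) (rot_h1 θ₁) (rot_h2 θ₁)
      (rot_h1 θ₂) (rot_h2 θ₂) a b
    have hw := wignerd_pair s θ₁ θ₂ ((s : ℤ) - a) ((s : ℤ) - b)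
    rw [hflip] at hw
    have hsa : 2 * ((s : ℤ) - a) - (s : ℤ) = D₁ := by
      rw [ha]
      have hmm : ((min l1 l2 : ℕ) : ℤ) = min L₁ L₂ := by omega
      have hxx : ((s : ℕ) : ℤ) = |L₁ - L₂| + 2 * k := habs
      rcases le_total L₁ L₂ with h | h
      · rw [abs_of_nonpos (by omega)] at hxx
        omega
      · rw [abs_of_nonneg (by omega)] at hxx
        omega
    have hsb : 2 * ((s : ℤ) - b) - (s : ℤ) = D₂ := by
      rw [hb]
      have hmm : ((min l1 l2 : ℕ) : ℤ) = min L₁ L₂ := by omega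
      have hxx : ((s : ℕ) : ℤ) = |L₁ - L₂| + 2 * k := habs
      rcases le_total L₁ L₂ with h | h
      · rw [abs_of_nonpos (by omega)] at hxx
        omega
      · rw [abs_of_nonneg (by omega)] at hxx
        omega
    rw [hsa, hsb, habs] at hw
    exact hw
  rw [lhs_eq, rhs_eq]
  have hdet : (GG θ₁ θ₂) 0 0 * (GG θ₁ θ₂) 1 1 - (GG θ₁ θ₂) 0 1 * (GG θ₁ θ₂) 1 0 = 1 := by
    rw [← Matrix.det_fin_two]
    exact detGG θ₁ θ₂
  have hCG := chr_CG (GG θ₁ θ₂) hdet l1 l2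
  have key := congrArg (fun u : AddMonoidAlgebra ℝ (ℤ × ℤ) => u.coeff ((-D₁, -D₂) : ℤ × ℤ)) hCG
  have hpt : ((-D₁, -D₂) : ℤ × ℤ) = ((2 * c1 - l1 - l2, 2 * c2 - l1 - l2) : ℤ × ℤ) := by
    rw [Prod.mk.injEq]
    constructor <;> omega
  rw [hpt, chr_mul_apply l1 l2 θ₁ θ₂ c1 c2, AddMonoidAlgebra.coeff_sum,
    Finsupp.finset_sum_apply] at key
  have rhskey : ∀ k ∈ range (min l1 l2 + 1),
      (chr (max l1 l2 - min l1 l2 + 2 * k) (GG θ₁ θ₂)).coeff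
          ((2 * c1 - l1 - l2, 2 * c2 - l1 - l2) : ℤ × ℤ)
        = Tc (max l1 l2 - min l1 l2 + 2 * k) (rot θ₁)
              (c1 + k - min l1 l2) (c2 + k - min l1 l2) *
            Tc (max l1 l2 - min l1 l2 + 2 * k) (rot θ₂)
              (c2 + k - min l1 l2) (c1 + k - min l1 l2) := by
    intro k hk
    have hpt2 : ((2 * c1 - l1 - l2, 2 * c2 - l1 - l2) : ℤ × ℤ)
        = ((2 * (c1 + (k : ℤ) - min l1 l2) - (max l1 l2 - min l1 l2 + 2 * k : ℕ),
            2 * (c2 + (k : ℤ) - min l1 l2) - (max l1 l2 - min l1 l2 + 2 * k : ℕ)) : ℤ × ℤ) := by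
      have : min l1 l2 ≤ max l1 l2 := min_le_max
      rw [Prod.mk.injEq]
      constructor <;> (push_cast [Nat.cast_sub this]; omega)
    rw [hpt2, chr_apply]
  rw [Finset.sum_congr rfl rhskey] at key
  exact key
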